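/- If A is a well-pointed space and p : X → Y is a based map that is a (not necessarily based) homotopy equivalence, then the induced map p∗ : Top∗(A, X) → Top∗(A, Y) on based mapping spaces is a homotopy equivalence. -/

import Mathlib

universe u v

/-- The homotopy extension property for a map `i : A → X`. -/
def HasHEP {A : Type u} {X : Type v} [TopologicalSpace A] [TopologicalSpace X]
    (i : A → X) : Prop :=
  ∀ (Y : Type (max u v)) (_ : TopologicalSpace Y) (f : X → Y), Continuous f →
    ∀ H : unitInterval × A → Y, Continuous H → (∀ a, H (0, a) = f (i a)) →
      ∃ G : unitInterval × X → Y, Continuous G ∧ (∀ x, G (0, x) = f x) ∧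
        ∀ t a, G (t, i a) = H (t, a)

/-- A closed cofibration: a closed embedding with the homotopy extension property. -/
def IsClosedCofibration {A : Type u} {X : Type v} [TopologicalSpace A] [TopologicalSpace X]
    (i : A → X) : Prop :=
  Topology.IsClosedEmbedding i ∧ HasHEP i

/-- The space of based maps `(A, a₀) → (X, x₀)`, topologized as a subspace of the
mapping space `C(A, X)` with the (k-ified) compact-open topology. -/
def BasedMaps (A X : Type) [TopologicalSpace A] [TopologicalSpace X] (a₀ : A) (x₀ : X) :=
  {f : C(A, X) // f a₀ = x₀}

instance (A X : Type) [TopologicalSpace A] [TopologicalSpace X] (a₀ : A) (x₀ : X) :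
    TopologicalSpace (BasedMaps A X a₀ x₀) :=
  inferInstanceAs (TopologicalSpace {f : C(A, X) // f a₀ = x₀})

open Set unitInterval ContinuousMap Topology

namespace BPaux
open scoped Classical

variable {A : Type} [TopologicalSpace A] {a₀ : A}

/-- The subspace `I × {a₀} ∪ {0} × A` of `I × A`. -/
abbrev SP (a₀ : A) : Type := {z : unitInterval × A // z.2 = a₀ ∨ z.1 = 0}

/-- Compatible pairs (path, map). -/
abbrev PB (a₀ : A) (B : Type) [TopologicalSpace B] : Type :=
  {x : C(unitInterval, B) × C(A, B) // x.2 a₀ = x.1 0}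

variable {B : Type} [TopologicalSpace B]

/-- glue of a path and a map on `SP a₀`. -/
noncomputable def glueFun (x : PB a₀ B) : SP a₀ → B :=
  ({z : SP a₀ | z.1.2 = a₀}).piecewise (fun z => x.1.1 z.1.1) (fun z => x.1.2 z.1.2)

lemma glueFun_eq₁ (x : PB a₀ B) (z : SP a₀) (h : z.1.2 = a₀) :
    glueFun x z = x.1.1 z.1.1 := by
  simp [glueFun, Set.piecewise, h]

lemma glueFun_eq₂ (x : PB a₀ B) (z : SP a₀) (h : z.1.1 = 0) :
    glueFun x z = x.1.2 z.1.2 := by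
  by_cases h' : z.1.2 = a₀
  · rw [glueFun_eq₁ x z h', h, h', x.2]
  · simp [glueFun, Set.piecewise, h']

lemma isClosed_C1 (ha : IsClosed ({a₀} : Set A)) : IsClosed {z : SP a₀ | z.1.2 = a₀} := by
  have : {z : SP a₀ | z.1.2 = a₀} = (fun z : SP a₀ => z.1.2) ⁻¹' {a₀} := rfl
  rw [this]
  exact IsClosed.preimage (continuous_snd.comp continuous_subtype_val) ha

lemma isClosed_C2 : IsClosed {z : SP a₀ | z.1.1 = 0} := by
  have : {z : SP a₀ | z.1.1 = 0} = (fun z : SP a₀ => z.1.1) ⁻¹' {0} := rfl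
  rw [this]
  exact IsClosed.preimage (continuous_fst.comp continuous_subtype_val) isClosed_singleton

lemma continuous_glueFun (ha : IsClosed ({a₀} : Set A)) (x : PB a₀ B) : Continuous (glueFun x) := by
  apply continuous_piecewise
  · intro z hz
    have h1 : z ∈ {z : SP a₀ | z.1.2 = a₀} :=
      (isClosed_C1 ha).closure_subset (frontier_subset_closure hz)
    have h2 : z.1.1 = 0 := by
      have hsub : closure {z : SP a₀ | z.1.2 = a₀}ᶜ ⊆ {z : SP a₀ | z.1.1 = 0} := by
        apply (isClosed_C2 (a₀ := a₀)).closure_subset_iff.mpr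
        intro w hw
        rcases w.2 with h | h
        · exact absurd h hw
        · exact h
      exact hsub (by rw [closure_compl]; exact hz.2)
    show x.1.1 z.1.1 = x.1.2 z.1.2
    rw [h1, h2, x.2]
  · exact ((map_continuous x.1.1).comp
      (continuous_fst.comp continuous_subtype_val)).continuousOn
  · exact ((map_continuous x.1.2).comp
      (continuous_snd.comp continuous_subtype_val)).continuousOn

/-- bundled glue -/
noncomputable def glueCM (ha : IsClosed ({a₀} : Set A)) (x : PB a₀ B) : C(SP a₀, B) := ⟨glueFun x, continuous_glueFun ha x⟩

lemma continuous_glueCM (ha : IsClosed ({a₀} : Set A)) : Continuous (glueCM (a₀ := a₀) (B := B) ha) := by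
  rw [continuous_compactOpen]
  intro K hK U hU
  have hK1 : IsCompact ((fun z : SP a₀ => z.1.1) '' (K ∩ {z | z.1.2 = a₀})) :=
    (hK.inter_right (isClosed_C1 ha)).image
      (continuous_fst.comp continuous_subtype_val)
  have hK2 : IsCompact ((fun z : SP a₀ => z.1.2) '' (K ∩ {z | z.1.1 = 0})) :=
    (hK.inter_right (isClosed_C2 (a₀ := a₀))).image
      (continuous_snd.comp continuous_subtype_val)
  have hset : {x : PB a₀ B | MapsTo (glueCM ha x) K U} =
      ((fun x : PB a₀ B => x.1.1) ⁻¹' {f | MapsTo f ((fun z : SP a₀ => z.1.1) '' (K ∩ {z | z.1.2 = a₀})) U}) ∩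
      ((fun x : PB a₀ B => x.1.2) ⁻¹' {f | MapsTo f ((fun z : SP a₀ => z.1.2) '' (K ∩ {z | z.1.1 = 0})) U}) := by
    ext x
    constructor
    · intro hx
      constructor
      · rintro t ⟨z, ⟨hzK, hz1⟩, rfl⟩
        have := hx hzK
        rwa [glueCM, ContinuousMap.coe_mk, glueFun_eq₁ x z hz1] at this
      · rintro a ⟨z, ⟨hzK, hz2⟩, rfl⟩
        have := hx hzK
        rwa [glueCM, ContinuousMap.coe_mk, glueFun_eq₂ x z hz2] at this
    · rintro ⟨hx1, hx2⟩ z hzK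
      show glueFun x z ∈ U
      rcases z.2 with h | h
      · rw [glueFun_eq₁ x z h]
        exact hx1 ⟨z, ⟨hzK, h⟩, rfl⟩
      · rw [glueFun_eq₂ x z h]
        exact hx2 ⟨z, ⟨hzK, h⟩, rfl⟩
  rw [hset]
  exact ((isOpen_setOf_mapsTo hK1 hU).preimage (by fun_prop)).inter
    ((isOpen_setOf_mapsTo hK2 hU).preimage (by fun_prop))


/-- inclusion `a ↦ (τ, a)`. -/
def ins {A' : Type} [TopologicalSpace A'] (τ : unitInterval) : C(A', unitInterval × A') :=
  ⟨fun a => (τ, a), (continuous_const.prodMk continuous_id)⟩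

/-- Joint continuity of slicing a homotopy at a time. -/
lemma continuous_slice {A' B' : Type} [TopologicalSpace A'] [TopologicalSpace B'] :
    Continuous (fun y : C(unitInterval × A', B') × unitInterval => y.1.comp (ins y.2)) := by
  rw [continuous_compactOpen]
  intro L hL U hU
  rw [isOpen_iff_mem_nhds]
  rintro ⟨F₀, τ₀⟩ h
  have hsub : {τ₀} ×ˢ L ⊆ F₀ ⁻¹' U := by
    rintro ⟨t, a⟩ ⟨ht, haL⟩
    rcases ht with rfl
    exact h haL
  obtain ⟨J, V, hJ, hV, hτJ, hLV, hJV⟩ :=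
    generalized_tube_lemma isCompact_singleton hL (hU.preimage (map_continuous F₀)) hsub
  obtain ⟨Jc, hJc, hτJc, hJcJ⟩ := exists_compact_subset hJ (hτJ rfl)
  rw [nhds_prod_eq]
  apply Filter.mem_of_superset
    (Filter.prod_mem_prod
      ((isOpen_setOf_mapsTo (hJc.prod hL) hU).mem_nhds ?_)
      (isOpen_interior.mem_nhds hτJc))
  · rintro ⟨F, τ⟩ ⟨hF, hτ⟩
    intro a haL
    exact hF ⟨interior_subset hτ, haL⟩
  · rintro ⟨t, a⟩ ⟨htJc, haL⟩
    exact hJV ⟨hJcJ htJc, hLV haL⟩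

variable (r : C(unitInterval × A, SP a₀))

/-- The fundamental homotopy associated to a compatible pair. -/
noncomputable def PhiCM (ha : IsClosed ({a₀} : Set A)) (x : PB a₀ B) :
    C(unitInterval × A, B) := (glueCM ha x).comp r

lemma continuous_PhiCM (ha : IsClosed ({a₀} : Set A)) :
    Continuous (PhiCM (B := B) r ha) :=
  (continuous_precomp r).comp (continuous_glueCM ha)

lemma PhiCM_zero (ha : IsClosed ({a₀} : Set A))
    (hr0 : ∀ a : A, ((r (0, a) : unitInterval × A)) = (0, a)) (x : PB a₀ B) (a : A) :
    PhiCM r ha x (0, a) = x.1.2 a := by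
  show glueFun x (r (0, a)) = x.1.2 a
  rw [glueFun_eq₂ x (r (0, a)) (by rw [hr0]), hr0]

lemma PhiCM_base (ha : IsClosed ({a₀} : Set A))
    (hra : ∀ t : unitInterval, ((r (t, a₀) : unitInterval × A)) = (t, a₀))
    (x : PB a₀ B) (t : unitInterval) :
    PhiCM r ha x (t, a₀) = x.1.1 t := by
  show glueFun x (r (t, a₀)) = x.1.1 t
  rw [glueFun_eq₁ x (r (t, a₀)) (by rw [hra]), hra]

/-- time-τ slice of the fundamental homotopy. -/
noncomputable def PhiT (ha : IsClosed ({a₀} : Set A)) (x : PB a₀ B) (τ : unitInterval) :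
    C(A, B) := (PhiCM r ha x).comp (ins τ)

lemma PhiT_apply (ha : IsClosed ({a₀} : Set A)) (x : PB a₀ B) (τ : unitInterval) (a : A) :
    PhiT r ha x τ a = PhiCM r ha x (τ, a) := rfl

lemma continuous_PhiT (ha : IsClosed ({a₀} : Set A)) :
    Continuous (fun w : PB a₀ B × unitInterval => PhiT r ha w.1 w.2) :=
  continuous_slice.comp (((continuous_PhiCM r ha).comp continuous_fst).prodMk continuous_snd)

lemma PhiT_zero (ha : IsClosed ({a₀} : Set A))
    (hr0 : ∀ a : A, ((r (0, a) : unitInterval × A)) = (0, a)) (x : PB a₀ B) :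
    PhiT r ha x 0 = x.1.2 := by
  ext a; exact PhiCM_zero r ha hr0 x a

lemma PhiT_base (ha : IsClosed ({a₀} : Set A))
    (hra : ∀ t : unitInterval, ((r (t, a₀) : unitInterval × A)) = (t, a₀))
    (x : PB a₀ B) (τ : unitInterval) :
    PhiT r ha x τ a₀ = x.1.1 τ := PhiCM_base r ha hra x τ

/-- transport of the map along the path. -/
noncomputable def transp (ha : IsClosed ({a₀} : Set A)) (x : PB a₀ B) : C(A, B) :=
  PhiT r ha x 1

lemma continuous_transp (ha : IsClosed ({a₀} : Set A)) :
    Continuous (transp (B := B) r ha) :=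
  (continuous_PhiT r ha).comp (continuous_id.prodMk continuous_const)

lemma transp_base (ha : IsClosed ({a₀} : Set A))
    (hra : ∀ t : unitInterval, ((r (t, a₀) : unitInterval × A)) = (t, a₀)) (x : PB a₀ B) :
    transp r ha x a₀ = x.1.1 1 := PhiT_base r ha hra x 1


noncomputable def sigC : C(unitInterval × unitInterval, unitInterval) :=
  ⟨fun w => ⟨w.1.1 + w.2.1 * (1 - w.1.1), by
      constructor
      · nlinarith [w.1.2.1, w.2.2.1, w.1.2.2]
      · nlinarith [w.1.2.1, w.1.2.2, w.2.2.1, w.2.2.2]⟩, by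
    apply Continuous.subtype_mk; fun_prop⟩

lemma sigC_one_right (τ : unitInterval) : sigC (τ, 1) = 1 := by
  apply Subtype.ext; simp [sigC]
lemma sigC_zero_left (t : unitInterval) : sigC (0, t) = t := by
  apply Subtype.ext; simp [sigC]
lemma sigC_one_left (t : unitInterval) : sigC (1, t) = 1 := by
  apply Subtype.ext; simp [sigC]

/-- reparametrization `t ↦ τ + t(1-τ)`. -/
noncomputable def sig (τ : unitInterval) : C(unitInterval, unitInterval) :=
  sigC.comp (ins τ)

lemma sig_apply (τ t : unitInterval) : sig τ t = sigC (τ, t) := rfl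

/-- the symm map bundled -/
noncomputable def symmCM : C(unitInterval, unitInterval) := ⟨unitInterval.symm, continuous_symm⟩

variable (ha : IsClosed ({a₀} : Set A))
  (hr0 : ∀ a : A, ((r (0, a) : unitInterval × A)) = (0, a))
  (hra : ∀ t : unitInterval, ((r (t, a₀) : unitInterval × A)) = (t, a₀))

/-- transport as a map of based mapping spaces. -/
noncomputable def Tmap {b₀ b₁ : B} (ℓ : C(unitInterval, B)) (h0 : ℓ 0 = b₀) (h1 : ℓ 1 = b₁) :
    C(BasedMaps A B a₀ b₀, BasedMaps A B a₀ b₁) :=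
  ⟨fun g => ⟨transp r ha ⟨(ℓ, g.1), by rw [g.2, h0]⟩,
      by rw [transp_base r ha hra, h1]⟩, by
    apply Continuous.subtype_mk
    exact (continuous_transp r ha).comp
      ((continuous_const.prodMk continuous_subtype_val).subtype_mk _)⟩

lemma Tmap_apply {b₀ b₁ : B} (ℓ : C(unitInterval, B)) (h0 : ℓ 0 = b₀) (h1 : ℓ 1 = b₁)
    (g : BasedMaps A B a₀ b₀) :
    (Tmap r ha hra ℓ h0 h1 g).1 = transp r ha ⟨(ℓ, g.1), by rw [g.2, h0]⟩ := rfl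

lemma Tmap_congr {b₀ b₁ : B} (ℓ ℓ' : C(unitInterval, B)) (h : ℓ = ℓ')
    (h0 : ℓ 0 = b₀) (h1 : ℓ 1 = b₁) (h0' : ℓ' 0 = b₀) (h1' : ℓ' 1 = b₁) :
    Tmap r ha hra ℓ h0 h1 = Tmap r ha hra ℓ' h0' h1' := by subst h; rfl

/-- The master lemma. -/
theorem masterLemma {Z : Type} [TopologicalSpace Z] {b₀ : B}
    (hr0 : ∀ a : A, ((r (0, a) : unitInterval × A)) = (0, a))
    (hra : ∀ t : unitInterval, ((r (t, a₀) : unitInterval × A)) = (t, a₀))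
    (ℓ : C(unitInterval, B)) (hl1 : ℓ 1 = b₀)
    (Dc : unitInterval × Z → C(A, B)) (hDc : Continuous Dc)
    (htr : ∀ τ z, Dc (τ, z) a₀ = ℓ τ)
    (U V : C(Z, BasedMaps A B a₀ b₀))
    (hU : ∀ z, (U z).1 = transp r ha ⟨(ℓ, Dc (0, z)), htr 0 z⟩)
    (hV : ∀ z, (V z).1 = Dc (1, z)) : U.Homotopic V := by
  classical
  -- midpoint map
  have hcomp1 : ∀ (τ : unitInterval) (z : Z), (Dc (τ, z)) a₀ = (ℓ.comp (sig τ)) 0 := by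
    intro τ z
    rw [htr τ z]
    show ℓ τ = ℓ (sig τ 0)
    congr 1
    rw [sig_apply]
    apply Subtype.ext
    simp [sigC]
  have hbase1 : ∀ (τ : unitInterval), (ℓ.comp (sig τ)) 1 = b₀ := by
    intro τ
    show ℓ (sig τ 1) = b₀
    rw [sig_apply, sigC_one_right, hl1]
  let M : C(Z, BasedMaps A B a₀ b₀) :=
    ⟨fun z => ⟨transp r ha ⟨(ℓ.comp (sig 1), Dc (1, z)), hcomp1 1 z⟩,
        by rw [transp_base r ha hra]; exact hbase1 1⟩, by
      apply Continuous.subtype_mk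
      apply (continuous_transp r ha).comp
      apply Continuous.subtype_mk
      exact continuous_const.prodMk (hDc.comp (continuous_const.prodMk continuous_id))⟩
  have H1 : ContinuousMap.Homotopy U M := by
    refine ⟨⟨fun w => ⟨transp r ha ⟨(ℓ.comp (sig w.1), Dc w), hcomp1 w.1 w.2⟩,
        by rw [transp_base r ha hra]; exact hbase1 w.1⟩, ?_⟩, ?_, ?_⟩
    · apply Continuous.subtype_mk
      apply (continuous_transp r ha).comp
      apply Continuous.subtype_mk
      refine Continuous.prodMk ?_ hDc
      -- τ ↦ ℓ.comp (sig τ) = (ℓ.comp sigC).comp (ins τ)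
      have : (fun w : unitInterval × Z => ℓ.comp (sig w.1)) =
          (fun w : unitInterval × Z => (ℓ.comp sigC).comp (ins w.1)) := rfl
      rw [this]
      exact continuous_slice.comp (continuous_const.prodMk continuous_fst)
    · intro z
      apply Subtype.ext
      show transp r ha ⟨(ℓ.comp (sig 0), Dc (0, z)), _⟩ = (U z).1
      rw [hU z]
      congr 1
      apply Subtype.ext
      apply Prod.ext
      · show ℓ.comp (sig 0) = ℓ
        ext t
        show ℓ (sig 0 t) = ℓ t
        rw [sig_apply, sigC_zero_left]
      · rfl
    · intro z; rfl
  have H2 : ContinuousMap.Homotopy M V := by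
    have hcomp2 : ∀ z : Z, (Dc (1, z)) a₀ = (ContinuousMap.const unitInterval b₀ : C(unitInterval, B)) 0 := by
      intro z; rw [htr 1 z]; exact hl1
    refine ⟨⟨fun w => ⟨PhiT r ha ⟨(ContinuousMap.const unitInterval b₀, Dc (1, w.2)), hcomp2 w.2⟩
        (unitInterval.symm w.1),
        by rw [PhiT_base r ha hra]; rfl⟩, ?_⟩, ?_, ?_⟩
    · apply Continuous.subtype_mk
      exact (continuous_PhiT r ha).comp
        (Continuous.prodMk
          (Continuous.subtype_mk
            (continuous_const.prodMk (hDc.comp (continuous_const.prodMk continuous_snd))) _)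
          (continuous_symm.comp continuous_fst))
    · intro z
      apply Subtype.ext
      show PhiT r ha _ (unitInterval.symm 0) = (M z).1
      rw [unitInterval.symm_zero]
      show transp r ha _ = (M z).1
      show _ = transp r ha ⟨(ℓ.comp (sig 1), Dc (1, z)), hcomp1 1 z⟩
      congr 1
      apply Subtype.ext
      apply Prod.ext
      · show (ContinuousMap.const unitInterval b₀ : C(unitInterval, B)) = ℓ.comp (sig 1)
        ext t
        show b₀ = ℓ (sig 1 t)
        rw [sig_apply, sigC_one_left, hl1]
      · rfl
    · intro z
      apply Subtype.ext
      show PhiT r ha _ (unitInterval.symm 1) = (V z).1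
      rw [unitInterval.symm_one, PhiT_zero r ha hr0, hV z]
  exact ⟨H1.trans H2⟩


lemma symmCM_apply (t : unitInterval) : symmCM t = unitInterval.symm t := rfl

lemma comp_symm_zero {b₀ b₁ : B} (ℓ : C(unitInterval, B)) (h1 : ℓ 1 = b₁) :
    (ℓ.comp symmCM) 0 = b₁ := by
  show ℓ (unitInterval.symm 0) = b₁
  rw [unitInterval.symm_zero, h1]

lemma comp_symm_one {b₀ b₁ : B} (ℓ : C(unitInterval, B)) (h0 : ℓ 0 = b₀) :
    (ℓ.comp symmCM) 1 = b₀ := by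
  show ℓ (unitInterval.symm 1) = b₀
  rw [unitInterval.symm_one, h0]

/-- Transport along the reverse path is a left homotopy inverse of transport. -/
theorem Tmap_inv
    (hr0 : ∀ a : A, ((r (0, a) : unitInterval × A)) = (0, a))
    {b₀ b₁ : B} (ℓ : C(unitInterval, B)) (h0 : ℓ 0 = b₀) (h1 : ℓ 1 = b₁) :
    ((Tmap r ha hra (ℓ.comp symmCM) (comp_symm_zero (b₀ := b₀) ℓ h1)
        (comp_symm_one (b₁ := b₁) ℓ h0)).comp
      (Tmap r ha hra ℓ h0 h1)).Homotopic
    (ContinuousMap.id (BasedMaps A B a₀ b₀)) := by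
  refine masterLemma r ha hr0 hra (ℓ.comp symmCM)
    (comp_symm_one (b₁ := b₁) ℓ h0)
    (fun w => PhiT r ha ⟨(ℓ, w.2.1), by rw [w.2.2, h0]⟩ (unitInterval.symm w.1))
    ?_ ?_ _ _ ?_ ?_
  · exact (continuous_PhiT r ha).comp
      (Continuous.prodMk
        (Continuous.subtype_mk
          (continuous_const.prodMk (continuous_subtype_val.comp continuous_snd)) _)
        (continuous_symm.comp continuous_fst))
  · intro τ z
    rw [PhiT_base r ha hra]
    rfl
  · intro g
    apply congrArg (transp r ha)
    apply Subtype.ext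
    apply Prod.ext
    · rfl
    · show transp r ha ⟨(ℓ, g.1), by rw [g.2, h0]⟩ =
        PhiT r ha ⟨(ℓ, g.1), by rw [g.2, h0]⟩ (unitInterval.symm 0)
      rw [unitInterval.symm_zero]
      rfl
  · intro g
    show g.1 = PhiT r ha ⟨(ℓ, g.1), _⟩ (unitInterval.symm 1)
    rw [unitInterval.symm_one, PhiT_zero r ha hr0]

/-- Transport along a path is a homotopy equivalence of based mapping spaces. -/
noncomputable def TmapHE
    (hr0 : ∀ a : A, ((r (0, a) : unitInterval × A)) = (0, a))
    {b₀ b₁ : B} (ℓ : C(unitInterval, B)) (h0 : ℓ 0 = b₀) (h1 : ℓ 1 = b₁) :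
    ContinuousMap.HomotopyEquiv (BasedMaps A B a₀ b₀) (BasedMaps A B a₀ b₁) where
  toFun := Tmap r ha hra ℓ h0 h1
  invFun := Tmap r ha hra (ℓ.comp symmCM) (comp_symm_zero (b₀ := b₀) ℓ h1)
    (comp_symm_one (b₁ := b₁) ℓ h0)
  left_inv := Tmap_inv r ha hra hr0 ℓ h0 h1
  right_inv := by
    have h := Tmap_inv r ha hra hr0 (ℓ.comp symmCM)
      (comp_symm_zero (b₀ := b₀) ℓ h1) (comp_symm_one (b₁ := b₁) ℓ h0)
    have he : (ℓ.comp symmCM).comp symmCM = ℓ := by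
      ext t
      show ℓ (unitInterval.symm (unitInterval.symm t)) = ℓ t
      rw [unitInterval.symm_symm]
    rwa [Tmap_congr r ha hra ((ℓ.comp symmCM).comp symmCM) ℓ he _ _ h0 h1] at h


/-- Joint continuity of `(t, g) ↦ h(t, ·) ∘ g`. -/
lemma continuous_curry_comp {T Y' B' A' : Type} [TopologicalSpace T] [TopologicalSpace Y']
    [TopologicalSpace B'] [TopologicalSpace A'] (h : C(T × Y', B')) :
    Continuous (fun x : T × C(A', Y') => (h.curry x.1).comp x.2) := by
  rw [continuous_compactOpen]
  intro L hL U hU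
  rw [isOpen_iff_mem_nhds]
  rintro ⟨t₀, g₀⟩ hx
  have hsub : {t₀} ×ˢ (g₀ '' L) ⊆ h ⁻¹' U := by
    rintro ⟨t, y⟩ ⟨ht, ⟨a, haL, rfl⟩⟩
    rcases ht with rfl
    exact hx haL
  obtain ⟨J, V, hJ, hV, hτJ, hLV, hJV⟩ :=
    generalized_tube_lemma isCompact_singleton (hL.image (map_continuous g₀))
      (hU.preimage (map_continuous h)) hsub
  rw [nhds_prod_eq]
  apply Filter.mem_of_superset
    (Filter.prod_mem_prod (hJ.mem_nhds (hτJ rfl))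
      ((isOpen_setOf_mapsTo hL hV).mem_nhds (fun a haL => hLV ⟨a, haL, rfl⟩)))
  rintro ⟨t, g⟩ ⟨htJ, hg⟩ a haL
  exact hJV ⟨htJ, hg haL⟩

end BPaux

open BPaux

/-- If `A` is well-pointed and `p : X → Y` is a based map which is a (not necessarily
based) homotopy equivalence, then `p∗ : Top∗(A,X) → Top∗(A,Y)` is a homotopy
equivalence. -/
theorem basedMaps_postcomp_homotopyEquiv
    (A X Y : Type) [TopologicalSpace A] [TopologicalSpace X] [TopologicalSpace Y]
    (a₀ : A) (x₀ : X) (y₀ : Y)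
    (hA : IsClosedCofibration (fun _ : PUnit => a₀))
    (p : C(X, Y)) (hp₀ : p x₀ = y₀)
    (hp : ∃ e : ContinuousMap.HomotopyEquiv X Y, ⇑e.toFun = p) :
    ∃ e : ContinuousMap.HomotopyEquiv (BasedMaps A X a₀ x₀) (BasedMaps A Y a₀ y₀),
      ∀ f : BasedMaps A X a₀ x₀, (e.toFun f).1 = p.comp f.1 := by
  classical
  obtain ⟨e, he⟩ := hp
  have hef : e.toFun = p := ContinuousMap.ext fun x => congrFun he x
  set q := e.invFun with hqdef
  have hqp : (q.comp p).Homotopic (ContinuousMap.id X) := by rw [← hef]; exact e.left_inv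
  have hpq : (p.comp q).Homotopic (ContinuousMap.id Y) := by rw [← hef]; exact e.right_inv
  obtain ⟨H⟩ := hqp
  obtain ⟨K⟩ := hpq
  have ha : IsClosed ({a₀} : Set A) := by
    have := hA.1.isClosed_range
    rwa [Set.range_const] at this
  obtain ⟨G, hGc, hG0, hGa⟩ := hA.2 (ULift (SP a₀)) inferInstance
    (fun a => ⟨⟨((0 : unitInterval), a), Or.inr rfl⟩⟩)
    (continuous_uliftUp.comp
      (Continuous.subtype_mk (continuous_const.prodMk continuous_id) _))
    (fun w => ⟨⟨(w.1, a₀), Or.inl rfl⟩⟩)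
    (continuous_uliftUp.comp
      (Continuous.subtype_mk (continuous_fst.prodMk continuous_const) _))
    (fun u => by apply congrArg ULift.up; apply Subtype.ext; rfl)
  set r : C(unitInterval × A, SP a₀) :=
    ⟨fun z => (G z).down, continuous_uliftDown.comp hGc⟩ with hrdef
  have hr0 : ∀ a : A, ((r (0, a) : unitInterval × A)) = (0, a) :=
    fun a => congrArg (fun w => (ULift.down w).1) (hG0 a)
  have hra : ∀ t : unitInterval, ((r (t, a₀) : unitInterval × A)) = (t, a₀) :=
    fun t => congrArg (fun w => (ULift.down w).1) (hGa t PUnit.unit)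
  -- the two tracks
  let γ : C(unitInterval, X) :=
    ⟨fun t => H (t, x₀), H.continuous.comp (continuous_id.prodMk continuous_const)⟩
  have hγ0 : γ 0 = q y₀ := by
    show H (0, x₀) = q y₀
    rw [H.apply_zero]
    show q (p x₀) = q y₀
    rw [hp₀]
  have hγ1 : γ 1 = x₀ := by
    show H (1, x₀) = x₀
    rw [H.apply_one]
    rfl
  let κ : C(unitInterval, Y) :=
    ⟨fun t => K (t, y₀), K.continuous.comp (continuous_id.prodMk continuous_const)⟩
  have hκ0 : κ 0 = p (q y₀) := by
    show K (0, y₀) = p (q y₀)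
    rw [K.apply_zero]
    rfl
  have hκ1 : κ 1 = y₀ := by
    show K (1, y₀) = y₀
    rw [K.apply_one]
    rfl
  -- the based maps
  let Pst : C(BasedMaps A X a₀ x₀, BasedMaps A Y a₀ y₀) :=
    ⟨fun f => ⟨p.comp f.1, by show p (f.1 a₀) = y₀; rw [f.2, hp₀]⟩,
      by apply Continuous.subtype_mk
         exact (continuous_postcomp p).comp continuous_subtype_val⟩
  let QQ : C(BasedMaps A Y a₀ y₀, BasedMaps A X a₀ x₀) :=
    ⟨fun g => ⟨transp r ha ⟨(γ, q.comp g.1), by show q (g.1 a₀) = γ 0; rw [g.2, hγ0]⟩,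
        by rw [transp_base r ha hra]; exact hγ1⟩,
      by apply Continuous.subtype_mk
         exact (continuous_transp r ha).comp
          (Continuous.subtype_mk (continuous_const.prodMk
            ((continuous_postcomp q).comp continuous_subtype_val)) _)⟩
  -- ML application (A): Q ∘ P ≃ id
  have h₀ : (QQ.comp Pst).Homotopic (ContinuousMap.id (BasedMaps A X a₀ x₀)) := by
    refine masterLemma r ha hr0 hra γ hγ1
      (fun w => (H.toContinuousMap.curry w.1).comp w.2.1) ?_ ?_ _ _ ?_ ?_
    · exact (continuous_curry_comp H.toContinuousMap).comp
        (continuous_fst.prodMk (continuous_subtype_val.comp continuous_snd))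
    · intro τ f
      show H (τ, f.1 a₀) = H (τ, x₀)
      rw [f.2]
    · intro f
      apply congrArg (transp r ha)
      apply Subtype.ext
      apply Prod.ext
      · rfl
      · show q.comp (p.comp f.1) = (H.toContinuousMap.curry 0).comp f.1
        ext a
        show q (p (f.1 a)) = H (0, f.1 a)
        rw [H.apply_zero]
        rfl
    · intro f
      show f.1 = (H.toContinuousMap.curry 1).comp f.1
      ext a
      show f.1 a = H (1, f.1 a)
      rw [H.apply_one]
      rfl
  -- the auxiliary based space at p (q y₀)
  let W : C(BasedMaps A Y a₀ y₀, BasedMaps A Y a₀ (p (q y₀))) :=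
    ⟨fun g => ⟨(p.comp q).comp g.1, by show (p.comp q) (g.1 a₀) = p (q y₀); rw [g.2]; rfl⟩,
      by apply Continuous.subtype_mk
         exact (continuous_postcomp (p.comp q)).comp continuous_subtype_val⟩
  let Tκ := Tmap r ha hra κ hκ0 hκ1
  have h₁ : (Tκ.comp W).Homotopic (ContinuousMap.id (BasedMaps A Y a₀ y₀)) := by
    refine masterLemma r ha hr0 hra κ hκ1
      (fun w => (K.toContinuousMap.curry w.1).comp w.2.1) ?_ ?_ _ _ ?_ ?_
    · exact (continuous_curry_comp K.toContinuousMap).comp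
        (continuous_fst.prodMk (continuous_subtype_val.comp continuous_snd))
    · intro τ g
      show K (τ, g.1 a₀) = K (τ, y₀)
      rw [g.2]
    · intro g
      apply congrArg (transp r ha)
      apply Subtype.ext
      apply Prod.ext
      · rfl
      · show (p.comp q).comp g.1 = (K.toContinuousMap.curry 0).comp g.1
        ext a
        show (p.comp q) (g.1 a) = K (0, g.1 a)
        rw [K.apply_zero]
    · intro g
      show g.1 = (K.toContinuousMap.curry 1).comp g.1
      ext a
      show g.1 a = K (1, g.1 a)
      rw [K.apply_one]
      rfl
  -- second track
  let pγ : C(unitInterval, Y) := p.comp γ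
  have hpγ0 : pγ 0 = p (q y₀) := by show p (γ 0) = p (q y₀); rw [hγ0]
  have hpγ1 : pγ 1 = y₀ := by show p (γ 1) = y₀; rw [hγ1, hp₀]
  let Tpγ := Tmap r ha hra pγ hpγ0 hpγ1
  have h₂ : (Tpγ.comp W).Homotopic (Pst.comp QQ) := by
    refine masterLemma r ha hr0 hra pγ hpγ1
      (fun w => p.comp (PhiT r ha ⟨(γ, q.comp w.2.1),
        by show q (w.2.1 a₀) = γ 0; rw [w.2.2, hγ0]⟩ w.1)) ?_ ?_ _ _ ?_ ?_
    · exact (continuous_postcomp p).comp ((continuous_PhiT r ha).comp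
        ((Continuous.subtype_mk (continuous_const.prodMk
          ((continuous_postcomp q).comp (continuous_subtype_val.comp continuous_snd))) _).prodMk
          continuous_fst))
    · intro τ g
      show p (PhiT r ha _ τ a₀) = p (γ τ)
      rw [PhiT_base r ha hra]
    · intro g
      apply congrArg (transp r ha)
      apply Subtype.ext
      apply Prod.ext
      · rfl
      · show (p.comp q).comp g.1 = p.comp (PhiT r ha ⟨(γ, q.comp g.1), _⟩ 0)
        rw [PhiT_zero r ha hr0]
        rfl
    · intro g
      rfl
  -- transports are homotopy equivalences
  let Eκ := TmapHE r ha hra hr0 κ hκ0 hκ1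
  let Epγ := TmapHE r ha hra hr0 pγ hpγ0 hpγ1
  let E := Tpγ.comp Eκ.invFun
  let E' := Tκ.comp Epγ.invFun
  have hEκ : Eκ.toFun = Tκ := rfl
  have hEpγ : Epγ.toFun = Tpγ := rfl
  have hPQ_E : (Pst.comp QQ).Homotopic E := by
    have s1 : (E.comp (Tκ.comp W)).Homotopic (Tpγ.comp W) := by
      have t1 : ((Eκ.invFun.comp Tκ).comp W).Homotopic
          ((ContinuousMap.id _).comp W) :=
        ContinuousMap.Homotopic.comp Eκ.left_inv (ContinuousMap.Homotopic.refl W)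
      have t2 := ContinuousMap.Homotopic.comp (ContinuousMap.Homotopic.refl Tpγ) (t1)
      -- t2 : (Tpγ.comp ((Eκ.invFun.comp Tκ).comp W)).Homotopic (Tpγ.comp ((id).comp W))
      rw [ContinuousMap.id_comp] at t2
      exact t2
    have s2 : ((E.comp (Tκ.comp W))).Homotopic (E.comp (ContinuousMap.id _)) :=
      ContinuousMap.Homotopic.comp (ContinuousMap.Homotopic.refl E) h₁
    rw [ContinuousMap.comp_id] at s2
    exact h₂.symm.trans (s1.symm.trans s2)
  have hEE' : (E.comp E').Homotopic (ContinuousMap.id (BasedMaps A Y a₀ y₀)) := by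
    have t1 : ((Eκ.invFun.comp Tκ).comp Epγ.invFun).Homotopic
        ((ContinuousMap.id _).comp Epγ.invFun) :=
      ContinuousMap.Homotopic.comp Eκ.left_inv (ContinuousMap.Homotopic.refl Epγ.invFun)
    have t2 := ContinuousMap.Homotopic.comp (ContinuousMap.Homotopic.refl Tpγ) t1
    rw [ContinuousMap.id_comp] at t2
    exact t2.trans Epγ.right_inv
  have g1 : (Pst.comp (QQ.comp (Pst.comp (QQ.comp E')))).Homotopic
      (ContinuousMap.id (BasedMaps A Y a₀ y₀)) := by
    have t1 : ((QQ.comp Pst).comp (QQ.comp E')).Homotopic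
        ((ContinuousMap.id _).comp (QQ.comp E')) :=
      ContinuousMap.Homotopic.comp h₀ (ContinuousMap.Homotopic.refl (QQ.comp E'))
    have t2 := ContinuousMap.Homotopic.comp (ContinuousMap.Homotopic.refl Pst) t1
    rw [ContinuousMap.id_comp] at t2
    have t3 : (Pst.comp (QQ.comp E')).Homotopic (E.comp E') :=
      ContinuousMap.Homotopic.comp hPQ_E (ContinuousMap.Homotopic.refl E')
    exact (t2.trans t3).trans hEE'
  have g2 : (Pst.comp (QQ.comp (Pst.comp (QQ.comp E')))).Homotopic E := by
    have t1 : ((Pst.comp QQ).comp ((Pst.comp QQ).comp E')).Homotopic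
        (E.comp (E.comp E')) :=
      ContinuousMap.Homotopic.comp hPQ_E (ContinuousMap.Homotopic.comp hPQ_E (ContinuousMap.Homotopic.refl E'))
    have t2 : (E.comp (E.comp E')).Homotopic (E.comp (ContinuousMap.id _)) :=
      ContinuousMap.Homotopic.comp (ContinuousMap.Homotopic.refl E) hEE'
    rw [ContinuousMap.comp_id] at t2
    exact t1.trans t2
  have hEid : E.Homotopic (ContinuousMap.id _) := g2.symm.trans g1
  have hPQid : (Pst.comp QQ).Homotopic (ContinuousMap.id _) := hPQ_E.trans hEid
  exact ⟨⟨Pst, QQ, h₀, hPQid⟩, fun f => rfl⟩
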